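/- A unitary V on ℂᵈ ⊗ ℂᵈ is primitive if and only if V = S ⊗ T or V = (S ⊗ T)P for some unitaries S, T on ℂᵈ, where P is the swap operator P(x ⊗ y) = y ⊗ x. -/

import Mathlib

open Matrix Kronecker Complex

/-- The tensor (Kronecker) product of two vectors of `ℂᵈ`, as a vector of `ℂᵈ ⊗ ℂᵈ`. -/
def tensorVec {d : ℕ} (x y : Fin d → ℂ) : Fin d × Fin d → ℂ := fun p => x p.1 * y p.2

/-- A vector of `ℂᵈ ⊗ ℂᵈ` is decomposable if it is a tensor product of two vectors. -/
def Decomposable {d : ℕ} (z : Fin d × Fin d → ℂ) : Prop := ∃ u v : Fin d → ℂ, z = tensorVec u v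

/-- A gate on `ℂᵈ ⊗ ℂᵈ` is primitive if it maps decomposable tensors to decomposable tensors. -/
def Primitive {d : ℕ} (V : Matrix (Fin d × Fin d) (Fin d × Fin d) ℂ) : Prop :=
  ∀ x y : Fin d → ℂ, Decomposable (V.mulVec (tensorVec x y))

namespace Stmt9
variable {d : ℕ}

/-- Two vectors are "parallel" (proportional, or one of them zero-ish). -/
def Para (u v : Fin d → ℂ) : Prop := ∀ i j, u i * v j = u j * v i

lemma para_symm {u v : Fin d → ℂ} (h : Para u v) : Para v u := fun i j => by
  have := h j i; linear_combination this

lemma para_zero_left {v : Fin d → ℂ} : Para (0 : Fin d → ℂ) v := fun i j => by simp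

lemma para_zero_right {u : Fin d → ℂ} : Para u (0 : Fin d → ℂ) := fun i j => by simp

lemma para_exists {u v : Fin d → ℂ} (hu : u ≠ 0) (h : Para u v) : ∃ c : ℂ, v = c • u := by
  obtain ⟨i₀, hi₀⟩ : ∃ i, u i ≠ 0 := by
    by_contra hc; push_neg at hc; exact hu (funext fun i => hc i)
  refine ⟨v i₀ / u i₀, funext fun j => ?_⟩
  simp only [Pi.smul_apply, smul_eq_mul]
  have := h i₀ j
  field_simp
  linear_combination this

lemma para_smul {u : Fin d → ℂ} (c : ℂ) : Para u (c • u) := fun i j => by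
  simp only [Pi.smul_apply, smul_eq_mul]; ring

lemma para_trans {u v w : Fin d → ℂ} (hu : u ≠ 0) (h1 : Para u v) (h2 : Para u w) :
    Para v w := by
  obtain ⟨c, rfl⟩ := para_exists hu h1
  obtain ⟨c', rfl⟩ := para_exists hu h2
  intro i j
  simp only [Pi.smul_apply, smul_eq_mul]; ring

lemma para_smul_right {u v : Fin d → ℂ} {c : ℂ} (hc : c ≠ 0) (h : Para u (c • v)) : Para u v := by
  intro i j
  have := h i j
  simp only [Pi.smul_apply, smul_eq_mul] at this
  have h2 : c * (u i * v j) = c * (u j * v i) := by linear_combination this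
  exact mul_left_cancel₀ hc h2

lemma tv_apply {x y : Fin d → ℂ} (i j : Fin d) : tensorVec x y (i, j) = x i * y j := rfl

lemma tv_add_right (x y y' : Fin d → ℂ) :
    tensorVec x (y + y') = tensorVec x y + tensorVec x y' := by
  funext p; simp [tensorVec]; ring

lemma tv_add_left (x x' y : Fin d → ℂ) :
    tensorVec (x + x') y = tensorVec x y + tensorVec x' y := by
  funext p; simp [tensorVec]; ring

lemma tv_smul_right (c : ℂ) (x y : Fin d → ℂ) :
    tensorVec x (c • y) = c • tensorVec x y := by
  funext p; simp [tensorVec]; ring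

lemma tv_smul_left (c : ℂ) (x y : Fin d → ℂ) :
    tensorVec (c • x) y = c • tensorVec x y := by
  funext p; simp [tensorVec]; ring

lemma tv_smul_smul (c c' : ℂ) (x y : Fin d → ℂ) :
    tensorVec (c • x) (c' • y) = (c * c') • tensorVec x y := by
  funext p; simp [tensorVec]; ring

lemma tv_eq_zero {x y : Fin d → ℂ} (h : x = 0 ∨ y = 0) : tensorVec x y = 0 := by
  rcases h with h | h <;> subst h <;> funext p <;> simp [tensorVec]

lemma tv_ne_zero {x y : Fin d → ℂ} (hx : x ≠ 0) (hy : y ≠ 0) : tensorVec x y ≠ 0 := by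
  obtain ⟨i, hi⟩ : ∃ i, x i ≠ 0 := by
    by_contra hc; push_neg at hc; exact hx (funext fun i => hc i)
  obtain ⟨j, hj⟩ : ∃ j, y j ≠ 0 := by
    by_contra hc; push_neg at hc; exact hy (funext fun j => hc j)
  intro h
  have := congrFun h (i, j)
  simp [tensorVec] at this
  tauto

lemma decomp_iff (z : Fin d × Fin d → ℂ) :
    Decomposable z ↔ ∀ i j k l, z (i, j) * z (k, l) = z (i, l) * z (k, j) := by
  constructor
  · rintro ⟨u, v, rfl⟩ i j k l
    simp only [tensorVec]; ring
  · intro h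
    by_cases hz : z = 0
    · exact ⟨0, 0, by simp [hz, tv_eq_zero]⟩
    · obtain ⟨p, hp⟩ : ∃ p, z p ≠ 0 := by
        by_contra hc; push_neg at hc; exact hz (funext fun p => hc p)
      refine ⟨fun i => z (i, p.2), fun j => z (p.1, j) / z p, funext fun q => ?_⟩
      have := h q.1 q.2 p.1 p.2
      simp only [tensorVec]
      simp only [Prod.mk.eta] at this ⊢
      rw [show z q = z (q.1, q.2) from by rw [Prod.mk.eta]]
      have hp' : z (p.1, p.2) ≠ 0 := by rwa [Prod.mk.eta]
      field_simp
      linear_combination this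

lemma tv_unique {a b a' b' : Fin d → ℂ} (h : tensorVec a b = tensorVec a' b')
    (hz : tensorVec a b ≠ 0) : Para a a' ∧ Para b b' := by
  obtain ⟨p, hp⟩ : ∃ p, tensorVec a b p ≠ 0 := by
    by_contra hc; push_neg at hc; exact hz (funext fun p => hc p)
  have hab : ∀ i j, a i * b j = a' i * b' j := fun i j => congrFun h (i, j)
  have hb0 : b p.2 ≠ 0 := fun hb => hp (by simp [tensorVec, hb])
  have ha0 : a p.1 ≠ 0 := fun ha => hp (by simp [tensorVec, ha])
  have hb0' : b' p.2 ≠ 0 := by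
    intro hb
    have := hab p.1 p.2
    rw [hb] at this; simp at this
    exact hp (by simpa [tensorVec] using this)
  have ha0' : a' p.1 ≠ 0 := by
    intro ha
    have := hab p.1 p.2
    rw [ha] at this; simp at this
    exact hp (by simpa [tensorVec] using this)
  constructor
  · intro i k
    have h1 := hab i p.2
    have h2 := hab k p.2
    -- a i * b j0 = a' i * b' j0 ; a k * b j0 = a' k * b' j0
    have key : (a i * a' k - a k * a' i) * (b p.2 * b' p.2) = 0 := by
      linear_combination (a' k * b' p.2) * h1 - (a' i * b' p.2) * h2
    have := mul_ne_zero hb0 hb0'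
    have h3 : a i * a' k - a k * a' i = 0 := by
      rcases mul_eq_zero.mp key with h | h
      · exact h
      · exact absurd h this
    linear_combination h3
  · intro j l
    have h1 := hab p.1 j
    have h2 := hab p.1 l
    have key : (b j * b' l - b l * b' j) * (a p.1 * a' p.1) = 0 := by
      linear_combination (a' p.1 * b' l) * h1 - (a' p.1 * b' j) * h2
    have := mul_ne_zero ha0 ha0'
    have h3 : b j * b' l - b l * b' j = 0 := by
      rcases mul_eq_zero.mp key with h | h
      · exact h
      · exact absurd h this
    linear_combination h3

/-- Key rank lemma: if the sum of two decomposables is decomposable,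
    then the left vectors or the right vectors are parallel. -/
lemma para_of_sum_decomp {a b a' b' : Fin d → ℂ}
    (h : Decomposable (tensorVec a b + tensorVec a' b')) : Para a a' ∨ Para b b' := by
  by_contra hc
  push_neg at hc
  obtain ⟨hA, hB⟩ := hc
  simp only [Para, not_forall] at hA hB
  obtain ⟨i, k, hik⟩ := hA
  obtain ⟨j, l, hjl⟩ := hB
  rw [decomp_iff] at h
  have hm := h i j k l
  simp only [Pi.add_apply, tensorVec] at hm
  have key : (a i * a' k - a k * a' i) * (b j * b' l - b l * b' j) = 0 := by
    linear_combination hm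
  rcases mul_eq_zero.mp key with h' | h'
  · exact hik (by linear_combination h')
  · exact hjl (by linear_combination h')


/-- `z` lies in `R_α`: every column of `z` is a multiple of `α`. -/
def InR (α : Fin d → ℂ) (z : Fin d × Fin d → ℂ) : Prop :=
  ∀ i j k, z (i, j) * α k = z (k, j) * α i

lemma inR_zero (α : Fin d → ℂ) : InR α (0 : Fin d × Fin d → ℂ) := by
  intro i j k; simp

lemma inR_add {α : Fin d → ℂ} {z w : Fin d × Fin d → ℂ} (hz : InR α z) (hw : InR α w) :
    InR α (z + w) := by
  intro i j k
  have h1 := hz i j k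
  have h2 := hw i j k
  simp only [Pi.add_apply]
  ring_nf
  linear_combination h1 + h2

lemma inR_sub {α : Fin d → ℂ} {z w : Fin d × Fin d → ℂ} (hz : InR α z) (hw : InR α w) :
    InR α (z - w) := by
  intro i j k
  have h1 := hz i j k
  have h2 := hw i j k
  simp only [Pi.sub_apply]
  linear_combination h1 - h2

lemma inR_smul {α : Fin d → ℂ} {z : Fin d × Fin d → ℂ} (c : ℂ) (hz : InR α z) :
    InR α (c • z) := by
  intro i j k
  have h1 := hz i j k
  simp only [Pi.smul_apply, smul_eq_mul]
  linear_combination c * h1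

lemma inR_tv {α a b : Fin d → ℂ} (h : Para a α) : InR α (tensorVec a b) := by
  intro i j k
  simp only [tensorVec]
  have := h i k
  linear_combination b j * this

lemma para_of_inR {α a b : Fin d → ℂ} (hb : b ≠ 0) (h : InR α (tensorVec a b)) : Para a α := by
  obtain ⟨j, hj⟩ : ∃ j, b j ≠ 0 := by
    by_contra hc; push_neg at hc; exact hb (funext fun j => hc j)
  intro i k
  have := h i j k
  simp only [tensorVec] at this
  have h2 : (a i * α k) * b j = (a k * α i) * b j := by linear_combination this
  exact mul_right_cancel₀ hj h2

lemma inR_eq_zero {α : Fin d → ℂ} {z : Fin d × Fin d → ℂ} {i₀ : Fin d} (hi₀ : α i₀ ≠ 0)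
    (h : InR α z) (h0 : ∀ j, z (i₀, j) = 0) : z = 0 := by
  funext p
  have := h p.1 p.2 i₀
  rw [h0 p.2] at this
  simp only [Pi.zero_apply]
  have : z (p.1, p.2) * α i₀ = 0 := by linear_combination this
  rcases mul_eq_zero.mp this with h' | h'
  · rwa [Prod.mk.eta] at h'
  · exact absurd h' hi₀

/-- The standard basis vector. -/
def e (i : Fin d) : Fin d → ℂ := Pi.single i 1

lemma e_ne_zero (i : Fin d) : (e i : Fin d → ℂ) ≠ 0 := by
  intro h
  have := congrFun h i
  simp [e] at this

lemma not_para_e {i k : Fin d} (h : i ≠ k) : ¬ Para (e (d := d) i) (e k) := by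
  intro hp
  have := hp i k
  simp [e, Pi.single_apply, h, h.symm] at this

lemma tv_single (i j : Fin d) :
    tensorVec (e i) (e j) = Pi.single ((i, j) : Fin d × Fin d) (1 : ℂ) := by
  funext p
  rcases p with ⟨p, q⟩
  simp only [tensorVec, e, Pi.single_apply, Prod.mk.injEq, Prod.ext_iff]
  by_cases h1 : p = i <;> by_cases h2 : q = j <;> simp [h1, h2]

/-- No injective linear map from a pair space to `Fin d → ℂ` (for `d ≥ 1`). -/
lemma not_inj_pair {d : ℕ} (hd : 1 ≤ d)
    (g : ((Fin d → ℂ) × (Fin d → ℂ)) →ₗ[ℂ] (Fin d → ℂ)) :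
    ¬ Function.Injective g := by
  intro h
  have := LinearMap.finrank_le_finrank_of_injective h
  simp [Module.finrank_prod] at this
  omega

lemma not_inj_big {d : ℕ} (hd : 2 ≤ d)
    (g : ((Fin d × Fin d → ℂ)) →ₗ[ℂ] (Fin d → ℂ)) :
    ¬ Function.Injective g := by
  intro h
  have := LinearMap.finrank_le_finrank_of_injective h
  simp at this
  nlinarith

/-- `x ⊗ u + x' ⊗ v = 0` with `x, x'` non-parallel implies `u = v = 0`. -/
lemma tv_sum_eq_zero {x x' u v : Fin d → ℂ} (hxx : ¬ Para x x')
    (h : tensorVec x u + tensorVec x' v = 0) : u = 0 ∧ v = 0 := by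
  simp only [Para, not_forall] at hxx
  obtain ⟨i, k, hik⟩ := hxx
  have hz : ∀ p q, x p * u q + x' p * v q = 0 := by
    intro p q
    have := congrFun h (p, q)
    simpa [tensorVec] using this
  constructor
  · funext j
    have h1 := hz i j
    have h2 := hz k j
    have key : (x i * x' k - x k * x' i) * u j = 0 := by
      linear_combination x' k * h1 - x' i * h2
    simp only [Pi.zero_apply]
    rcases mul_eq_zero.mp key with h' | h'
    · exact absurd (by linear_combination h') hik
    · exact h'
  · funext j
    have h1 := hz i j
    have h2 := hz k j
    have key : (x i * x' k - x k * x' i) * v j = 0 := by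
      linear_combination x i * h2 - x k * h1
    simp only [Pi.zero_apply]
    rcases mul_eq_zero.mp key with h' | h'
    · exact absurd (by linear_combination h') hik
    · exact h'

/-- The swap linear map on `ℂᵈ ⊗ ℂᵈ`. -/
def swapL : (Fin d × Fin d → ℂ) →ₗ[ℂ] (Fin d × Fin d → ℂ) where
  toFun z := fun p => z (p.2, p.1)
  map_add' z w := rfl
  map_smul' c z := rfl

lemma swapL_tv (x y : Fin d → ℂ) : swapL (tensorVec x y) = tensorVec y x := by
  funext p; simp [swapL, tensorVec]; ring

lemma swapL_inj : Function.Injective (swapL (d := d)) := by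
  intro z w h
  funext p
  have := congrFun h (p.2, p.1)
  simpa [swapL] using this


lemma tv_zero_iff {x y : Fin d → ℂ} : tensorVec x y = 0 ↔ x = 0 ∨ y = 0 := by
  constructor
  · intro h
    by_contra hc
    push_neg at hc
    exact tv_ne_zero hc.1 hc.2 h
  · exact tv_eq_zero

/-- `z` lies in `C_β`: every row of `z` is a multiple of `β`. -/
def InC (β : Fin d → ℂ) (z : Fin d × Fin d → ℂ) : Prop := InR β (swapL z)

lemma inC_tv {β a b : Fin d → ℂ} (h : Para b β) : InC β (tensorVec a b) := by
  rw [InC, swapL_tv]; exact inR_tv h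

lemma para_of_inC {β a b : Fin d → ℂ} (ha : a ≠ 0) (h : InC β (tensorVec a b)) : Para b β := by
  rw [InC, swapL_tv] at h; exact para_of_inR ha h

lemma inC_sub {β : Fin d → ℂ} {z w : Fin d × Fin d → ℂ} (hz : InC β z) (hw : InC β w) :
    InC β (z - w) := by
  rw [InC, map_sub]; exact inR_sub hz hw

lemma inR_sum {α : Fin d → ℂ} {ι : Type*} {s : Finset ι} {g : ι → (Fin d × Fin d → ℂ)}
    (h : ∀ p ∈ s, InR α (g p)) : InR α (∑ p ∈ s, g p) := by
  classical
  induction s using Finset.induction_on with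
  | empty => simpa using inR_zero α
  | insert _ _ hni ih =>
    rw [Finset.sum_insert hni]
    exact inR_add (h _ (Finset.mem_insert_self _ _))
      (ih fun p hp => h p (Finset.mem_insert_of_mem hp))

lemma single_decomp (z : Fin d × Fin d → ℂ) :
    z = ∑ p : Fin d × Fin d, z p • tensorVec (e p.1) (e p.2) := by
  have h1 : ∀ p : Fin d × Fin d, z p • tensorVec (e p.1) (e p.2) = Pi.single p (z p) := by
    intro p
    rw [tv_single, Prod.mk.eta]
    funext r
    simp only [Pi.smul_apply, Pi.single_apply, smul_eq_mul]
    split <;> simp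
  simp_rw [h1]
  exact (Finset.univ_sum_single z).symm

section Core

variable {f : (Fin d × Fin d → ℂ) →ₗ[ℂ] (Fin d × Fin d → ℂ)}
  {a b : (Fin d → ℂ) → (Fin d → ℂ) → (Fin d → ℂ)}

/-- Nonzero inputs give nonzero factors. -/
lemma ne0 (hab : ∀ x y, f (tensorVec x y) = tensorVec (a x y) (b x y))
    (hinj : Function.Injective f)
    {x y : Fin d → ℂ} (hx : x ≠ 0) (hy : y ≠ 0) : a x y ≠ 0 ∧ b x y ≠ 0 := by
  have h1 : f (tensorVec x y) ≠ 0 := by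
    intro h
    rw [show (0 : Fin d × Fin d → ℂ) = f 0 by simp] at h
    exact tv_ne_zero hx hy (hinj h)
  rw [hab] at h1
  constructor
  · intro h; exact h1 (tv_eq_zero (Or.inl h))
  · intro h; exact h1 (tv_eq_zero (Or.inr h))

lemma pair_row (hab : ∀ x y, f (tensorVec x y) = tensorVec (a x y) (b x y))
    (x y y' : Fin d → ℂ) :
    Para (a x y) (a x y') ∨ Para (b x y) (b x y') := by
  apply para_of_sum_decomp
  rw [← hab, ← hab, ← map_add, ← tv_add_right, hab]
  exact ⟨_, _, rfl⟩

lemma pair_col (hab : ∀ x y, f (tensorVec x y) = tensorVec (a x y) (b x y))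
    (x x' y : Fin d → ℂ) :
    Para (a x y) (a x' y) ∨ Para (b x y) (b x' y) := by
  apply para_of_sum_decomp
  rw [← hab, ← hab, ← map_add, ← tv_add_left, hab]
  exact ⟨_, _, rfl⟩

/-- Fact 1 : each "row" line maps to a row type or column type family. -/
lemma fact1 (hab : ∀ x y, f (tensorVec x y) = tensorVec (a x y) (b x y))
    (h0 : ∀ x y, tensorVec x y = 0 → a x y = 0 ∧ b x y = 0)
    (hinj : Function.Injective f) (x : Fin d → ℂ) :
    (∀ y y', Para (a x y) (a x y')) ∨ (∀ y y', Para (b x y) (b x y')) := by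
  by_cases hR : ∀ y y', Para (a x y) (a x y')
  · exact Or.inl hR
  right
  push_neg at hR
  obtain ⟨y₁, y₂, hnP⟩ := hR
  have ha1 : a x y₁ ≠ 0 := fun h => hnP (h ▸ para_zero_left)
  have ha2 : a x y₂ ≠ 0 := fun h => hnP (h ▸ para_zero_right)
  have hx : x ≠ 0 := fun h => ha1 (h0 x y₁ (tv_eq_zero (Or.inl h))).1
  have hy₁ : y₁ ≠ 0 := fun h => ha1 (h0 x y₁ (tv_eq_zero (Or.inr h))).1
  have hy₂ : y₂ ≠ 0 := fun h => ha2 (h0 x y₂ (tv_eq_zero (Or.inr h))).1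
  have hb1 : b x y₁ ≠ 0 := (ne0 hab hinj hx hy₁).2
  have hb2 : b x y₂ ≠ 0 := (ne0 hab hinj hx hy₂).2
  have hB12 : Para (b x y₁) (b x y₂) := (pair_row hab x y₁ y₂).resolve_left hnP
  have C1 : ∀ y, Para (b x y₁) (b x y) := by
    intro y
    by_cases hay : a x y = 0
    · have hz : tensorVec x y = 0 := by
        apply hinj
        rw [hab, hay, map_zero]
        exact tv_eq_zero (Or.inl rfl)
      rw [(h0 x y hz).2]
      exact para_zero_right
    rcases pair_row hab x y₁ y with h1 | h1
    · rcases pair_row hab x y₂ y with h2 | h2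
      · exact absurd (para_trans hay (para_symm h1) (para_symm h2)) hnP
      · exact para_trans hb2 (para_symm hB12) h2
    · exact h1
  intro y y'
  exact para_trans hb1 (C1 y) (C1 y')

/-- The global dichotomy over all rows. -/
lemma dichotomy (hd : 2 ≤ d)
    (hab : ∀ x y, f (tensorVec x y) = tensorVec (a x y) (b x y))
    (h0 : ∀ x y, tensorVec x y = 0 → a x y = 0 ∧ b x y = 0)
    (hinj : Function.Injective f) :
    (∀ x y y', Para (a x y) (a x y')) ∨ (∀ x y y', Para (b x y) (b x y')) := by
  by_cases hRall : ∀ x y y', Para (a x y) (a x y')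
  · exact Or.inl hRall
  by_cases hCall : ∀ x y y', Para (b x y) (b x y')
  · exact Or.inr hCall
  exfalso
  push_neg at hRall hCall
  obtain ⟨x₁, y₁, y₂, h₁⟩ := hRall
  obtain ⟨x₂, y₃, y₄, h₂⟩ := hCall
  have hC1 : ∀ y y', Para (b x₁ y) (b x₁ y') := by
    rcases fact1 hab h0 hinj x₁ with h | h
    · exact absurd (h y₁ y₂) h₁
    · exact h
  have hR2 : ∀ y y', Para (a x₂ y) (a x₂ y') := by
    rcases fact1 hab h0 hinj x₂ with h | h
    · exact h
    · exact absurd (h y₃ y₄) h₂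
  -- nonzero facts
  have ha11 : a x₁ y₁ ≠ 0 := fun h => h₁ (h ▸ para_zero_left)
  have ha12 : a x₁ y₂ ≠ 0 := fun h => h₁ (h ▸ para_zero_right)
  have hb23 : b x₂ y₃ ≠ 0 := fun h => h₂ (h ▸ para_zero_left)
  have hb24 : b x₂ y₄ ≠ 0 := fun h => h₂ (h ▸ para_zero_right)
  have hx₁ : x₁ ≠ 0 := fun h => ha11 (h0 x₁ y₁ (tv_eq_zero (Or.inl h))).1
  have hy₁ : y₁ ≠ 0 := fun h => ha11 (h0 x₁ y₁ (tv_eq_zero (Or.inr h))).1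
  have hy₂ : y₂ ≠ 0 := fun h => ha12 (h0 x₁ y₂ (tv_eq_zero (Or.inr h))).1
  have hx₂ : x₂ ≠ 0 := fun h => hb23 (h0 x₂ y₃ (tv_eq_zero (Or.inl h))).2
  have hy₃ : y₃ ≠ 0 := fun h => hb23 (h0 x₂ y₃ (tv_eq_zero (Or.inr h))).2
  have hy₄ : y₄ ≠ 0 := fun h => hb24 (h0 x₂ y₄ (tv_eq_zero (Or.inr h))).2
  have hb11 : b x₁ y₁ ≠ 0 := (ne0 hab hinj hx₁ hy₁).2
  have hb12 : b x₁ y₂ ≠ 0 := (ne0 hab hinj hx₁ hy₂).2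
  have ha23 : a x₂ y₃ ≠ 0 := (ne0 hab hinj hx₂ hy₃).1
  have ha24 : a x₂ y₄ ≠ 0 := (ne0 hab hinj hx₂ hy₄).1
  by_cases hpx : Para x₁ x₂
  · -- parallel case
    obtain ⟨c, hc⟩ := para_exists hx₁ hpx
    have hc0 : c ≠ 0 := by
      intro h
      rw [h, zero_smul] at hc
      exact hx₂ hc
    have key : ∀ y : Fin d → ℂ, y ≠ 0 →
        Para (a x₂ (c⁻¹ • y)) (a x₁ y) ∧ Para (b x₂ (c⁻¹ • y)) (b x₁ y) := by
      intro y hy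
      have ht : tensorVec x₂ (c⁻¹ • y) = tensorVec x₁ y := by
        rw [hc]
        funext p
        simp only [tensorVec, Pi.smul_apply, smul_eq_mul]
        field_simp
      have heq : tensorVec (a x₂ (c⁻¹ • y)) (b x₂ (c⁻¹ • y)) =
          tensorVec (a x₁ y) (b x₁ y) := by
        rw [← hab, ← hab, ht]
      have hnz : tensorVec (a x₂ (c⁻¹ • y)) (b x₂ (c⁻¹ • y)) ≠ 0 := by
        rw [heq]
        exact tv_ne_zero (ne0 hab hinj hx₁ hy).1 (ne0 hab hinj hx₁ hy).2
      exact tv_unique heq hnz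
    have P1 := (key y₁ hy₁).1
    have P2 := (key y₂ hy₂).1
    have hu1 : a x₂ (c⁻¹ • y₁) ≠ 0 :=
      (ne0 hab hinj hx₂ (smul_ne_zero (inv_ne_zero hc0) hy₁)).1
    have hu2 : a x₂ (c⁻¹ • y₂) ≠ 0 :=
      (ne0 hab hinj hx₂ (smul_ne_zero (inv_ne_zero hc0) hy₂)).1
    have t1 : Para (a x₁ y₁) (a x₂ (c⁻¹ • y₂)) :=
      para_trans hu1 P1 (hR2 (c⁻¹ • y₁) (c⁻¹ • y₂))
    exact h₁ (para_trans hu2 (para_symm t1) P2)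
  · -- independent case
    set α := a x₂ y₃ with hα_def
    set β := b x₁ y₁ with hβ_def
    have main : ∀ y : Fin d → ℂ,
        InR α (f (tensorVec x₁ y)) ∨ InC β (f (tensorVec x₂ y)) := by
      intro y
      by_cases hy : y = 0
      · left
        rw [hy, tv_eq_zero (Or.inr rfl), map_zero]
        exact inR_zero α
      have hdec : Decomposable
          (tensorVec (a x₁ y) (b x₁ y) + tensorVec (a x₂ y) (b x₂ y)) := by
        rw [← hab, ← hab, ← map_add, ← tv_add_left, hab]
        exact ⟨_, _, rfl⟩
      rcases para_of_sum_decomp hdec with hA | hB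
      · left
        have ha2y : a x₂ y ≠ 0 := (ne0 hab hinj hx₂ hy).1
        have : Para (a x₁ y) α :=
          para_trans ha2y (para_symm hA) (hR2 y y₃)
        rw [hab]
        exact inR_tv this
      · right
        have hb1y : b x₁ y ≠ 0 := (ne0 hab hinj hx₁ hy).2
        have : Para (b x₂ y) β :=
          para_trans hb1y hB (hC1 y y₁)
        rw [hab]
        exact inC_tv this
    have hα : α ≠ 0 := ha23
    have hβ : β ≠ 0 := hb11
    have hyP : ∃ yP, ¬ InR α (f (tensorVec x₁ yP)) := by
      by_contra hc
      push_neg at hc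
      have p1 : Para (a x₁ y₁) α := by
        have := hc y₁; rw [hab] at this
        exact para_of_inR hb11 this
      have p2 : Para (a x₁ y₂) α := by
        have := hc y₂; rw [hab] at this
        exact para_of_inR hb12 this
      exact h₁ (para_trans hα (para_symm p1) (para_symm p2))
    have hyQ : ∃ yQ, ¬ InC β (f (tensorVec x₂ yQ)) := by
      by_contra hc
      push_neg at hc
      have p1 : Para (b x₂ y₃) β := by
        have := hc y₃; rw [hab] at this
        exact para_of_inC ha23 this
      have p2 : Para (b x₂ y₄) β := by
        have := hc y₄; rw [hab] at this
        exact para_of_inC ha24 this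
      exact h₂ (para_trans hβ (para_symm p1) (para_symm p2))
    obtain ⟨yP, hP⟩ := hyP
    obtain ⟨yQ, hQ⟩ := hyQ
    have hPC : InC β (f (tensorVec x₂ yP)) := (main yP).resolve_left hP
    have hQR : InR α (f (tensorVec x₁ yQ)) := (main yQ).resolve_right hQ
    rcases main (yP + yQ) with h | h
    · apply hP
      have hsum : f (tensorVec x₁ (yP + yQ)) =
          f (tensorVec x₁ yP) + f (tensorVec x₁ yQ) := by
        rw [tv_add_right, map_add]
      rw [hsum] at h
      have := inR_sub h hQR
      simpa using this
    · apply hQ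
      have hsum : f (tensorVec x₂ (yP + yQ)) =
          f (tensorVec x₂ yP) + f (tensorVec x₂ yQ) := by
        rw [tv_add_right, map_add]
      rw [hsum] at h
      have := inC_sub h hPC
      simpa using this

/-- Distinctness: non-parallel inputs give non-parallel left factors
(in the all-rows-R case). -/
lemma distinct (hd : 2 ≤ d)
    (hab : ∀ x y, f (tensorVec x y) = tensorVec (a x y) (b x y))
    (hinj : Function.Injective f)
    (hA : ∀ x y y', Para (a x y) (a x y'))
    {x x' : Fin d → ℂ} (hxx : ¬ Para x x') {y : Fin d → ℂ} (hy : y ≠ 0) :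
    ¬ Para (a x y) (a x' y) := by
  intro hpar
  have hx : x ≠ 0 := fun h => hxx (h ▸ para_zero_left)
  have hx' : x' ≠ 0 := fun h => hxx (h ▸ para_zero_right)
  set α := a x y with hα_def
  have hα : α ≠ 0 := (ne0 hab hinj hx hy).1
  obtain ⟨i₀, hi₀⟩ : ∃ i, α i ≠ 0 := by
    by_contra hc; push_neg at hc; exact hα (funext fun i => hc i)
  have key : ∀ u v : Fin d → ℂ,
      (∀ j, f (tensorVec x u + tensorVec x' v) (i₀, j) = 0) → u = 0 ∧ v = 0 := by
    intro u v hj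
    have hInR : InR α (f (tensorVec x u + tensorVec x' v)) := by
      rw [map_add]
      apply inR_add
      · rw [hab]
        exact inR_tv (hA x u y)
      · rw [hab]
        have haxy' : a x' y ≠ 0 := (ne0 hab hinj hx' hy).1
        exact inR_tv (para_trans haxy' (para_symm (hA x' v y)) (para_symm hpar))
    have hz : f (tensorVec x u + tensorVec x' v) = 0 := inR_eq_zero hi₀ hInR hj
    have : tensorVec x u + tensorVec x' v = 0 := by
      apply hinj
      rw [hz, map_zero]
    exact tv_sum_eq_zero hxx this
  -- build the linear map
  let g : ((Fin d → ℂ) × (Fin d → ℂ)) →ₗ[ℂ] (Fin d → ℂ) :=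
    { toFun := fun uv => fun j => f (tensorVec x uv.1 + tensorVec x' uv.2) (i₀, j)
      map_add' := by
        intro uv uv'
        funext j
        have harg : tensorVec x (uv.1 + uv'.1) + tensorVec x' (uv.2 + uv'.2) =
            (tensorVec x uv.1 + tensorVec x' uv.2) +
            (tensorVec x uv'.1 + tensorVec x' uv'.2) := by
          rw [tv_add_right, tv_add_right]; abel
        simp only [Prod.fst_add, Prod.snd_add, harg, map_add, Pi.add_apply]
      map_smul' := by
        intro c uv
        funext j
        have harg : tensorVec x (c • uv.1) + tensorVec x' (c • uv.2) =
            c • (tensorVec x uv.1 + tensorVec x' uv.2) := by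
          rw [tv_smul_right, tv_smul_right, smul_add]
        simp only [Prod.smul_fst, Prod.smul_snd, harg, RingHom.id_apply]
        rw [f.map_smul]
        simp }
  have hginj : Function.Injective g := by
    intro uv uv' h
    have hsub : g (uv - uv') = 0 := by
      rw [map_sub, h, sub_self]
    have : uv.1 - uv'.1 = 0 ∧ uv.2 - uv'.2 = 0 := by
      apply key
      intro j
      have := congrFun hsub j
      simpa [g] using this
    have h1 : uv.1 = uv'.1 := sub_eq_zero.mp this.1
    have h2 : uv.2 = uv'.2 := sub_eq_zero.mp this.2
    exact Prod.ext h1 h2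
  exact not_inj_pair (by omega) g hginj

/-- In the doubly-row-parallel case we get a contradiction. -/
lemma notRR (hd : 2 ≤ d)
    (hab : ∀ x y, f (tensorVec x y) = tensorVec (a x y) (b x y))
    (h0 : ∀ x y, tensorVec x y = 0 → a x y = 0 ∧ b x y = 0)
    (hinj : Function.Injective f)
    (hA : ∀ x y y', Para (a x y) (a x y'))
    (hA' : ∀ x x' y, Para (a x y) (a x' y)) : False := by
  have hd0 : 0 < d := by omega
  set i0 : Fin d := ⟨0, hd0⟩ with hi0_def
  set α := a (e i0) (e i0) with hα_def
  have hα : α ≠ 0 := (ne0 hab hinj (e_ne_zero i0) (e_ne_zero i0)).1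
  obtain ⟨i₀, hi₀⟩ : ∃ i, α i ≠ 0 := by
    by_contra hc; push_neg at hc; exact hα (funext fun i => hc i)
  have hall : ∀ x y : Fin d → ℂ, Para (a x y) α := by
    intro x y
    by_cases hx : x = 0
    · rw [(h0 x y (tv_eq_zero (Or.inl hx))).1]; exact para_zero_left
    by_cases hy : y = 0
    · rw [(h0 x y (tv_eq_zero (Or.inr hy))).1]; exact para_zero_left
    have h1 : Para (a x (e i0)) (a x y) := para_symm (hA x y (e i0))
    have h2 : Para (a x (e i0)) α := hA' x (e i0) (e i0)
    exact para_trans ((ne0 hab hinj hx (e_ne_zero i0)).1) h1 h2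
  have hallInR : ∀ z, InR α (f z) := by
    intro z
    have hz : f z = ∑ p : Fin d × Fin d, z p • f (tensorVec (e p.1) (e p.2)) := by
      conv_lhs => rw [single_decomp z]
      rw [map_sum]
      congr 1
      funext p
      rw [f.map_smul]
    rw [hz]
    apply inR_sum
    intro p _
    rw [hab]
    exact inR_smul _ (inR_tv (hall _ _))
  let g : (Fin d × Fin d → ℂ) →ₗ[ℂ] (Fin d → ℂ) :=
    { toFun := fun z => fun j => f z (i₀, j)
      map_add' := by intro z w; funext j; simp [map_add]
      map_smul' := by
        intro c z
        funext j
        show f (c • z) (i₀, j) = _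
        rw [f.map_smul]
        simp }
  have hginj : Function.Injective g := by
    intro z w h
    have hsub : ∀ j, f (z - w) (i₀, j) = 0 := by
      intro j
      have hj := congrFun h j
      simp only [g, LinearMap.coe_mk, AddHom.coe_mk] at hj
      rw [map_sub]
      simp [hj]
    have hfz : f (z - w) = 0 := inR_eq_zero hi₀ (hallInR _) hsub
    have : z - w = 0 := hinj (by rw [hfz, map_zero])
    exact sub_eq_zero.mp this
  exact not_inj_big hd g hginj


/-- The construction: in the good row/column case, `f` acts as `S ⊗ T` on basis tensors. -/
lemma construction (hd : 2 ≤ d)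
    (hab : ∀ x y, f (tensorVec x y) = tensorVec (a x y) (b x y))
    (hinj : Function.Injective f)
    (hA : ∀ x y y', Para (a x y) (a x y'))
    (hB : ∀ x x' y, Para (b x y) (b x' y)) :
    ∃ S T : Matrix (Fin d) (Fin d) ℂ,
      ∀ i j p q, f (tensorVec (e i) (e j)) (p, q) = S p i * T q j := by
  have hd0 : 0 < d := by omega
  set i0 : Fin d := ⟨0, hd0⟩ with hi0_def
  set A : Fin d → Fin d → ℂ := fun i => a (e i) (e i0) with hA_def
  set B : Fin d → Fin d → ℂ := fun j => b (e i0) (e j) with hB_def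
  have hAne : ∀ i, A i ≠ 0 := fun i => (ne0 hab hinj (e_ne_zero i) (e_ne_zero i0)).1
  have hBne : ∀ j, B j ≠ 0 := fun j => (ne0 hab hinj (e_ne_zero i0) (e_ne_zero j)).2
  have hsc : ∀ i j, ∃ cc : ℂ × ℂ, cc.1 ≠ 0 ∧ cc.2 ≠ 0 ∧
      f (tensorVec (e i) (e j)) = (cc.1 * cc.2) • tensorVec (A i) (B j) := by
    intro i j
    obtain ⟨c, hc⟩ := para_exists (hAne i) (hA (e i) (e i0) (e j))
    obtain ⟨c', hc'⟩ := para_exists (hBne j) (hB (e i0) (e i) (e j))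
    have hane : a (e i) (e j) ≠ 0 := (ne0 hab hinj (e_ne_zero i) (e_ne_zero j)).1
    have hbne : b (e i) (e j) ≠ 0 := (ne0 hab hinj (e_ne_zero i) (e_ne_zero j)).2
    have hc0 : c ≠ 0 := by
      intro h; rw [h, zero_smul] at hc; exact hane hc
    have hc0' : c' ≠ 0 := by
      intro h; rw [h, zero_smul] at hc'; exact hbne hc'
    refine ⟨(c, c'), hc0, hc0', ?_⟩
    rw [hab, hc, hc', tv_smul_smul]
  choose cc hc1 hc2 hcf using hsc
  set γ : Fin d → Fin d → ℂ := fun i j => (cc i j).1 * (cc i j).2 with hγ_def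
  have hγ : ∀ i j, γ i j ≠ 0 := fun i j => mul_ne_zero (hc1 i j) (hc2 i j)
  have hfe : ∀ i j, f (tensorVec (e i) (e j)) = γ i j • tensorVec (A i) (B j) := hcf
  have hAd : ∀ i k, i ≠ k → ¬ Para (A i) (A k) := fun i k hik =>
    distinct hd hab hinj hA (not_para_e hik) (e_ne_zero i0)
  have hBd : ∀ j l, j ≠ l → ¬ Para (B j) (B l) := by
    intro j l hjl
    have hab3 : ∀ x y, (swapL ∘ₗ f ∘ₗ swapL) (tensorVec x y) =
        tensorVec ((fun x y => b y x) x y) ((fun x y => a y x) x y) := by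
      intro x y
      simp only [LinearMap.comp_apply]
      rw [swapL_tv, hab, swapL_tv]
    have hinj3 : Function.Injective (swapL ∘ₗ f ∘ₗ swapL :
        (Fin d × Fin d → ℂ) →ₗ[ℂ] (Fin d × Fin d → ℂ)) := by
      intro z w h
      apply swapL_inj
      apply hinj
      apply swapL_inj
      simpa [LinearMap.comp_apply] using h
    exact distinct hd hab3 hinj3 (fun x y y' => hB y y' x) (not_para_e hjl) (e_ne_zero i0)
  have hminor : ∀ i k j l, γ i j * γ k l = γ i l * γ k j := by
    intro i k j l
    by_cases hik : i = k
    · subst hik; ring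
    by_cases hjl : j = l
    · subst hjl; ring
    have hM : Decomposable (f (tensorVec (e i + e k) (e j + e l))) := by
      rw [hab]; exact ⟨_, _, rfl⟩
    have hMeq : f (tensorVec (e i + e k) (e j + e l)) =
        γ i j • tensorVec (A i) (B j) + γ i l • tensorVec (A i) (B l)
        + γ k j • tensorVec (A k) (B j) + γ k l • tensorVec (A k) (B l) := by
      rw [tv_add_left, tv_add_right, tv_add_right, map_add, map_add, map_add, hfe, hfe, hfe, hfe]
      abel
    rw [hMeq] at hM
    rw [decomp_iff] at hM
    have hik' := hAd i k hik
    simp only [Para, not_forall] at hik'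
    obtain ⟨p, p', hp⟩ := hik'
    have hjl' := hBd j l hjl
    simp only [Para, not_forall] at hjl'
    obtain ⟨q, q', hq⟩ := hjl'
    have hmm := hM p q p' q'
    simp only [Pi.add_apply, Pi.smul_apply, tv_apply, smul_eq_mul] at hmm
    have key : (A i p * A k p' - A i p' * A k p) *
        ((B j q * B l q' - B j q' * B l q) * (γ i j * γ k l - γ i l * γ k j)) = 0 := by
      linear_combination hmm
    rcases mul_eq_zero.mp key with h' | h'
    · exact absurd (by linear_combination h') hp
    rcases mul_eq_zero.mp h' with h'' | h''
    · exact absurd (by linear_combination h'') hq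
    · linear_combination h''
  set sv : Fin d → ℂ := fun i => γ i i0 with hsv_def
  set tv : Fin d → ℂ := fun j => γ i0 j / γ i0 i0 with htv_def
  have hst : ∀ i j, γ i j = sv i * tv j := by
    intro i j
    have hm := hminor i i0 j i0
    have h00 : γ i0 i0 ≠ 0 := hγ i0 i0
    show γ i j = γ i i0 * (γ i0 j / γ i0 i0)
    rw [mul_div_assoc', eq_div_iff h00]
    linear_combination hm
  refine ⟨Matrix.of fun p i => sv i * A i p, Matrix.of fun q j => tv j * B j q, ?_⟩
  intro i j p q
  rw [hfe]
  simp only [Pi.smul_apply, tv_apply, smul_eq_mul, Matrix.of_apply]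
  rw [hst]
  ring

end Core

section Helpers

lemma sum_ite_pair (g : Fin d → Fin d → ℂ) (j i : Fin d) :
    ∑ rs : Fin d × Fin d, g rs.1 rs.2 * (if rs.1 = j ∧ rs.2 = i then (1 : ℂ) else 0) = g j i := by
  rw [Fintype.sum_prod_type]
  have h1 : ∀ r : Fin d, ∑ s : Fin d, g r s * (if r = j ∧ s = i then (1 : ℂ) else 0)
      = if r = j then g r i else 0 := by
    intro r
    by_cases hr : r = j
    · subst hr
      simp only [true_and, if_true, mul_ite, mul_one, mul_zero]
      simp [Finset.sum_ite_eq']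
    · simp [hr]
  simp_rw [h1]
  simp [Finset.sum_ite_eq']

lemma sum_ite_pair' (g : Fin d → Fin d → ℂ) (p q : Fin d) :
    ∑ rs : Fin d × Fin d, (if p = rs.2 ∧ q = rs.1 then (1 : ℂ) else 0) * g rs.1 rs.2 = g q p := by
  have : ∀ rs : Fin d × Fin d, (if p = rs.2 ∧ q = rs.1 then (1 : ℂ) else 0) * g rs.1 rs.2
      = g rs.1 rs.2 * (if rs.1 = q ∧ rs.2 = p then (1 : ℂ) else 0) := by
    intro rs
    have : (p = rs.2 ∧ q = rs.1) ↔ (rs.1 = q ∧ rs.2 = p) := by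
      constructor
      · rintro ⟨h1, h2⟩; exact ⟨h2.symm, h1.symm⟩
      · rintro ⟨h1, h2⟩; exact ⟨h2.symm, h1.symm⟩
    rw [if_congr this rfl rfl]; ring
  simp_rw [this]
  exact sum_ite_pair g q p

/-- The swap matrix. -/
def P (d : ℕ) : Matrix (Fin d × Fin d) (Fin d × Fin d) ℂ :=
  Matrix.of (fun p q : Fin d × Fin d => if p.1 = q.2 ∧ p.2 = q.1 then (1 : ℂ) else 0)

lemma P_mul_P : P d * P d = 1 := by
  ext ⟨p, q⟩ ⟨i, j⟩
  rw [Matrix.mul_apply]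
  have : ∑ rs : Fin d × Fin d, P d (p, q) rs * P d rs (i, j)
      = ∑ rs : Fin d × Fin d, (if p = rs.2 ∧ q = rs.1 then (1 : ℂ) else 0) *
        (if rs.1 = j ∧ rs.2 = i then (1 : ℂ) else 0) := rfl
  rw [this, sum_ite_pair' (fun r s => if r = j ∧ s = i then (1 : ℂ) else 0) p q]
  rw [Matrix.one_apply]
  simp only [Prod.mk.injEq]
  by_cases h1 : p = i <;> by_cases h2 : q = j <;> simp [h1, h2]

lemma P_star : star (P d) = P d := by
  ext ⟨p, q⟩ ⟨i, j⟩
  rw [Matrix.star_apply]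
  show star (P d (i, j) (p, q)) = P d (p, q) (i, j)
  unfold P
  simp only [Matrix.of_apply]
  have : (i = q ∧ j = p) ↔ (p = j ∧ q = i) := by
    constructor
    · rintro ⟨h1, h2⟩; exact ⟨h2.symm, h1.symm⟩
    · rintro ⟨h1, h2⟩; exact ⟨h2.symm, h1.symm⟩
  rw [if_congr this rfl rfl]
  split <;> simp

lemma P_mem_unitary : P d ∈ Matrix.unitaryGroup (Fin d × Fin d) ℂ := by
  rw [Matrix.mem_unitaryGroup_iff']
  rw [P_star, P_mul_P]

lemma P_mulVec (z : Fin d × Fin d → ℂ) : P d *ᵥ z = swapL z := by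
  funext ⟨p, q⟩
  show ∑ rs : Fin d × Fin d, P d (p, q) rs * z rs = z (q, p)
  have : ∑ rs : Fin d × Fin d, P d (p, q) rs * z rs
      = ∑ rs : Fin d × Fin d, (if p = rs.2 ∧ q = rs.1 then (1 : ℂ) else 0) * z (rs.1, rs.2) := by
    apply Finset.sum_congr rfl
    intro rs _
    rw [Prod.mk.eta]
    rfl
  rw [this, sum_ite_pair' (fun r s => z (r, s)) p q]

lemma kron_mulVec (S T : Matrix (Fin d) (Fin d) ℂ) (x y : Fin d → ℂ) :
    (S ⊗ₖ T) *ᵥ (tensorVec x y) = tensorVec (S *ᵥ x) (T *ᵥ y) := by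
  funext ⟨p, q⟩
  show ∑ ij : Fin d × Fin d, (S ⊗ₖ T) (p, q) ij * tensorVec x y ij
      = (∑ i, S p i * x i) * (∑ j, T q j * y j)
  rw [Finset.sum_mul_sum, Fintype.sum_prod_type]
  apply Finset.sum_congr rfl
  intro i _
  apply Finset.sum_congr rfl
  intro j _
  show S p i * T q j * (x i * y j) = _
  ring

/-- From a unitary Kronecker product we can rescale the factors to be unitary. -/
lemma unitary_factor (hd : 2 ≤ d) {S T : Matrix (Fin d) (Fin d) ℂ}
    (hU : S ⊗ₖ T ∈ Matrix.unitaryGroup (Fin d × Fin d) ℂ) :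
    ∃ S' T' : Matrix (Fin d) (Fin d) ℂ, S' ∈ Matrix.unitaryGroup (Fin d) ℂ ∧
      T' ∈ Matrix.unitaryGroup (Fin d) ℂ ∧ S' ⊗ₖ T' = S ⊗ₖ T := by
  have hd0 : 0 < d := by omega
  set i0 : Fin d := ⟨0, hd0⟩ with hi0_def
  have h1 : star (S ⊗ₖ T) * (S ⊗ₖ T) = 1 := Matrix.mem_unitaryGroup_iff'.mp hU
  set G : Fin d → Fin d → ℂ := fun i k => ∑ p, (starRingEnd ℂ) (S p i) * S p k with hG_def
  set H : Fin d → Fin d → ℂ := fun j l => ∑ q, (starRingEnd ℂ) (T q j) * T q l with hH_def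
  have hGH : ∀ i j k l, G i k * H j l = if i = k ∧ j = l then 1 else 0 := by
    intro i j k l
    have h2 : (star (S ⊗ₖ T) * (S ⊗ₖ T)) (i, j) (k, l) = (1 : Matrix (Fin d × Fin d) (Fin d × Fin d) ℂ) (i, j) (k, l) := by
      rw [h1]
    rw [Matrix.mul_apply] at h2
    have h3 : ∑ pq : Fin d × Fin d, star (S ⊗ₖ T) (i, j) pq * (S ⊗ₖ T) pq (k, l)
        = G i k * H j l := by
      rw [hG_def, hH_def, Finset.sum_mul_sum, Fintype.sum_prod_type]
      apply Finset.sum_congr rfl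
      intro p _
      apply Finset.sum_congr rfl
      intro q _
      rw [Matrix.star_apply]
      show star ((S ⊗ₖ T) (p, q) (i, j)) * ((S ⊗ₖ T) (p, q) (k, l)) = _
      rw [Matrix.kroneckerMap_apply, Matrix.kroneckerMap_apply]
      simp only [star_mul', RCLike.star_def]
      ring
    rw [h3] at h2
    rw [h2, Matrix.one_apply]
    simp [Prod.ext_iff]
  have hγδ : G i0 i0 * H i0 i0 = 1 := by
    have := hGH i0 i0 i0 i0
    simpa using this
  set γ : ℂ := G i0 i0 with hγ_def
  have hγ0 : γ ≠ 0 := by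
    intro h; rw [h, zero_mul] at hγδ; exact zero_ne_one hγδ
  have hδ0 : H i0 i0 ≠ 0 := by
    intro h; rw [h, mul_zero] at hγδ; exact zero_ne_one hγδ
  have hG : ∀ i k, G i k = if i = k then γ else 0 := by
    intro i k
    by_cases hik : i = k
    · subst hik
      rw [if_pos rfl]
      have e1 : G i i * H i0 i0 = 1 := by simpa using hGH i i0 i i0
      have e2 : G i i * H i0 i0 = γ * H i0 i0 := by rw [hγδ, e1]
      exact mul_right_cancel₀ hδ0 e2
    · rw [if_neg hik]
      have e1 : G i k * H i0 i0 = 0 := by simpa [hik] using hGH i i0 k i0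
      rcases mul_eq_zero.mp e1 with h | h
      · exact h
      · exact absurd h hδ0
  have hH : ∀ j l, H j l = if j = l then γ⁻¹ else 0 := by
    intro j l
    by_cases hjl : j = l
    · subst hjl
      rw [if_pos rfl]
      have e1 : γ * H j j = 1 := by simpa using hGH i0 j i0 j
      field_simp
      linear_combination e1
    · rw [if_neg hjl]
      have e1 : γ * H j l = 0 := by simpa [hjl] using hGH i0 j i0 l
      rcases mul_eq_zero.mp e1 with h | h
      · exact absurd h hγ0
      · exact h
  -- γ is a positive real
  set r2 : ℝ := ∑ p, Complex.normSq (S p i0) with hr2_def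
  have hγr : γ = (r2 : ℂ) := by
    rw [hγ_def, hG_def, hr2_def]
    push_cast
    apply Finset.sum_congr rfl
    intro p _
    rw [mul_comm, Complex.mul_conj]
  have hr2nn : 0 ≤ r2 := Finset.sum_nonneg fun p _ => Complex.normSq_nonneg _
  have hr2pos : 0 < r2 := by
    rcases lt_or_eq_of_le hr2nn with h | h
    · exact h
    · exfalso; apply hγ0; rw [hγr, ← h]; simp
  set ρ : ℝ := Real.sqrt r2 with hρ_def
  have hρpos : 0 < ρ := Real.sqrt_pos.mpr hr2pos
  have hρ0 : (ρ : ℂ) ≠ 0 := by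
    simp only [ne_eq, Complex.ofReal_eq_zero]
    exact ne_of_gt hρpos
  have hρ2 : (ρ : ℂ) * (ρ : ℂ) = γ := by
    rw [hγr]
    rw [← Complex.ofReal_mul]
    congr 1
    rw [hρ_def]
    exact Real.mul_self_sqrt hr2nn
  have hSS : Sᴴ * S = γ • (1 : Matrix (Fin d) (Fin d) ℂ) := by
    ext i k
    rw [Matrix.mul_apply]
    have : ∑ p, Sᴴ i p * S p k = G i k := by
      apply Finset.sum_congr rfl
      intro p _
      rw [Matrix.conjTranspose_apply]
      rfl
    rw [this, hG i k]
    rw [Matrix.smul_apply, Matrix.one_apply]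
    split <;> simp
  have hTT : Tᴴ * T = γ⁻¹ • (1 : Matrix (Fin d) (Fin d) ℂ) := by
    ext j l
    rw [Matrix.mul_apply]
    have : ∑ q, Tᴴ j q * T q l = H j l := by
      apply Finset.sum_congr rfl
      intro q _
      rw [Matrix.conjTranspose_apply]
      rfl
    rw [this, hH j l]
    rw [Matrix.smul_apply, Matrix.one_apply]
    split <;> simp
  refine ⟨((ρ : ℂ))⁻¹ • S, (ρ : ℂ) • T, ?_, ?_, ?_⟩
  · rw [Matrix.mem_unitaryGroup_iff']
    have hstar : star (((ρ : ℂ))⁻¹ • S) = ((ρ : ℂ))⁻¹ • Sᴴ := by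
      show (((ρ : ℂ))⁻¹ • S)ᴴ = _
      rw [Matrix.conjTranspose_smul]
      congr 1
      simp [Complex.conj_ofReal]
    have hsc : ((ρ : ℂ))⁻¹ * ((ρ : ℂ))⁻¹ * γ = 1 := by
      rw [← hρ2]; field_simp
    rw [hstar, Matrix.smul_mul, Matrix.mul_smul, hSS, smul_smul, smul_smul, hsc, one_smul]
  · rw [Matrix.mem_unitaryGroup_iff']
    have hstar : star ((ρ : ℂ) • T) = (ρ : ℂ) • Tᴴ := by
      show ((ρ : ℂ) • T)ᴴ = _
      rw [Matrix.conjTranspose_smul]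
      congr 1
      simp [Complex.conj_ofReal]
    have hsc : (ρ : ℂ) * (ρ : ℂ) * γ⁻¹ = 1 := by
      rw [← hρ2]; field_simp
    rw [hstar, Matrix.smul_mul, Matrix.mul_smul, hTT, smul_smul, smul_smul, hsc, one_smul]
  · rw [Matrix.smul_kronecker, Matrix.kronecker_smul, smul_smul]
    rw [inv_mul_cancel₀ hρ0, one_smul]

end Helpers
end Stmt9

/-- A unitary `V` on `ℂᵈ ⊗ ℂᵈ` is primitive iff `V = S ⊗ T` or
`V = (S ⊗ T)P` for some unitaries `S, T` on `ℂᵈ`, where `P` is the swap. -/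
theorem stmt9 {d : ℕ} (hd : 2 ≤ d) (V : Matrix (Fin d × Fin d) (Fin d × Fin d) ℂ)
    (hV : V ∈ Matrix.unitaryGroup (Fin d × Fin d) ℂ) :
    Primitive V ↔ ∃ S T : Matrix (Fin d) (Fin d) ℂ,
      S ∈ Matrix.unitaryGroup (Fin d) ℂ ∧ T ∈ Matrix.unitaryGroup (Fin d) ℂ ∧
      (V = S ⊗ₖ T ∨ V = (S ⊗ₖ T) *
        Matrix.of (fun p q : Fin d × Fin d => if p.1 = q.2 ∧ p.2 = q.1 then (1 : ℂ) else 0)) := by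
  have hPdef : Matrix.of (fun p q : Fin d × Fin d =>
      if p.1 = q.2 ∧ p.2 = q.1 then (1 : ℂ) else 0) = Stmt9.P d := rfl
  constructor
  · intro hPrim
    set f : (Fin d × Fin d → ℂ) →ₗ[ℂ] (Fin d × Fin d → ℂ) := Matrix.mulVecLin V with hf_def
    have hfapp : ∀ z, f z = V *ᵥ z := fun z => Matrix.mulVecLin_apply V z
    have hinj : Function.Injective f := by
      intro z w h
      have h1 : star V * V = 1 := Matrix.mem_unitaryGroup_iff'.mp hV
      have hlv : ∀ u, (star V) *ᵥ (V *ᵥ u) = u := by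
        intro u
        rw [Matrix.mulVec_mulVec, h1, Matrix.one_mulVec]
      calc z = (star V) *ᵥ (V *ᵥ z) := (hlv z).symm
        _ = (star V) *ᵥ (V *ᵥ w) := by rw [← hfapp, ← hfapp, h]
        _ = w := hlv w
    have hdec : ∀ x y : Fin d → ℂ, ∃ u v : Fin d → ℂ,
        f (tensorVec x y) = tensorVec u v ∧ (tensorVec x y = 0 → u = 0 ∧ v = 0) := by
      intro x y
      by_cases hz : tensorVec x y = 0
      · refine ⟨0, 0, ?_, fun _ => ⟨rfl, rfl⟩⟩
        rw [hz, map_zero]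
        exact (Stmt9.tv_eq_zero (Or.inl rfl)).symm
      · obtain ⟨u, v, huv⟩ := hPrim x y
        exact ⟨u, v, by rw [hfapp]; exact huv, fun h => absurd h hz⟩
    choose a b hab h0 using hdec
    have hab2 : ∀ x y, (f ∘ₗ Stmt9.swapL) (tensorVec x y) =
        tensorVec ((fun x y => a y x) x y) ((fun x y => b y x) x y) := by
      intro x y
      simp only [LinearMap.comp_apply]
      rw [Stmt9.swapL_tv, hab]
    have h02 : ∀ x y : Fin d → ℂ, tensorVec x y = 0 →
        (fun x y => a y x) x y = 0 ∧ (fun x y => b y x) x y = 0 := by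
      intro x y h
      have h' : tensorVec y x = 0 := by
        rcases Stmt9.tv_zero_iff.mp h with h' | h'
        · exact Stmt9.tv_eq_zero (Or.inr h')
        · exact Stmt9.tv_eq_zero (Or.inl h')
      exact h0 y x h'
    have hinj2 : Function.Injective (f ∘ₗ Stmt9.swapL) := by
      intro z w h
      apply Stmt9.swapL_inj
      apply hinj
      simpa [LinearMap.comp_apply] using h
    rcases Stmt9.dichotomy hd hab h0 hinj with hA | hC <;>
      rcases Stmt9.dichotomy hd hab2 h02 hinj2 with hA' | hB'
    · exact (Stmt9.notRR hd hab h0 hinj hA (fun x x' y => hA' y x x')).elim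
    · obtain ⟨S, T, hST⟩ := Stmt9.construction hd hab hinj hA (fun x x' y => hB' y x x')
      have hVeq : V = S ⊗ₖ T := by
        ext ⟨p, q⟩ ⟨i, j⟩
        have h1 : f (tensorVec (Stmt9.e i) (Stmt9.e j)) (p, q) = S p i * T q j := hST i j p q
        rw [hfapp, Stmt9.tv_single, Matrix.mulVec_single] at h1
        show V (p, q) (i, j) = S p i * T q j
        simpa using h1
      obtain ⟨S', T', hS', hT', hK⟩ := Stmt9.unitary_factor hd
        (show S ⊗ₖ T ∈ Matrix.unitaryGroup (Fin d × Fin d) ℂ by rw [← hVeq]; exact hV)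
      exact ⟨S', T', hS', hT', Or.inl (by rw [hVeq, ← hK])⟩
    · obtain ⟨S, T, hST⟩ := Stmt9.construction hd hab2 hinj2 hA' (fun x x' y => hC y x x')
      have hVP : V * Stmt9.P d = S ⊗ₖ T := by
        ext ⟨p, q⟩ ⟨i, j⟩
        have h1 := hST i j p q
        simp only [LinearMap.comp_apply] at h1
        rw [Stmt9.swapL_tv, hfapp, Stmt9.tv_single, Matrix.mulVec_single] at h1
        show (V * Stmt9.P d) (p, q) (i, j) = S p i * T q j
        rw [Matrix.mul_apply]
        have h2 : ∑ rs : Fin d × Fin d, V (p, q) rs * Stmt9.P d rs (i, j)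
            = ∑ rs : Fin d × Fin d, (fun r s => V (p, q) (r, s)) rs.1 rs.2 *
              (if rs.1 = j ∧ rs.2 = i then (1 : ℂ) else 0) := by
          exact Finset.sum_congr rfl (fun rs _ => rfl)
        rw [h2, Stmt9.sum_ite_pair (fun r s => V (p, q) (r, s)) j i]
        simpa using h1
      have hVPU : S ⊗ₖ T ∈ Matrix.unitaryGroup (Fin d × Fin d) ℂ := by
        rw [← hVP]; exact mul_mem hV Stmt9.P_mem_unitary
      obtain ⟨S', T', hS', hT', hK⟩ := Stmt9.unitary_factor hd hVPU
      refine ⟨S', T', hS', hT', Or.inr ?_⟩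
      rw [hPdef, hK, ← hVP, Matrix.mul_assoc, Stmt9.P_mul_P, Matrix.mul_one]
    · exfalso
      have hab4 : ∀ x y, (Stmt9.swapL ∘ₗ f) (tensorVec x y) = tensorVec (b x y) (a x y) := by
        intro x y
        simp only [LinearMap.comp_apply]
        rw [hab, Stmt9.swapL_tv]
      have h04 : ∀ x y : Fin d → ℂ, tensorVec x y = 0 → b x y = 0 ∧ a x y = 0 :=
        fun x y h => ⟨(h0 x y h).2, (h0 x y h).1⟩
      have hinj4 : Function.Injective (Stmt9.swapL ∘ₗ f) := by
        intro z w h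
        apply hinj
        apply Stmt9.swapL_inj
        simpa [LinearMap.comp_apply] using h
      exact Stmt9.notRR hd hab4 h04 hinj4 hC (fun x x' y => hB' y x x')
  · rintro ⟨S, T, hS, hT, hcase | hcase⟩
    · intro x y
      rw [hcase, Stmt9.kron_mulVec]
      exact ⟨_, _, rfl⟩
    · intro x y
      rw [hcase, hPdef, ← Matrix.mulVec_mulVec, Stmt9.P_mulVec, Stmt9.swapL_tv,
        Stmt9.kron_mulVec]
      exact ⟨_, _, rfl⟩
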